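/- (The field of fractional power series is separably algebraically closed.) Let K be an algebraically closed field of characteristic zero and let F ∈ (K((X)))[Y] be a monic separable polynomial of degree n ≥ 1. Then there exist a positive integer m and Laurent series η₁, …, η_n ∈ K((T)) such that the image of F under the coefficient-wise field homomorphism τ_m (sending X to T^m) equals the product ∏_{i=1}^n (Y − C(η_i)). -/

import Mathlib

/-- The field homomorphism `K((X)) → K((T))` sending `Σ aᵢ Xⁱ` to `Σ aᵢ T^(m·i)`,
i.e. substitution of `T^m` for `X`. -/
noncomputable def LaurentSeries.substPow (R : Type*) [CommRing R] (m : ℕ+) :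
    LaurentSeries R →+* LaurentSeries R :=
  HahnSeries.embDomainRingHom (AddMonoidHom.mulLeft (m : ℤ))
    (fun _ _ h => by
      simpa using mul_left_cancel₀ (a := (m : ℤ)) (by exact_mod_cast m.ne_zero) h)
    (fun _ _ => mul_le_mul_iff_of_pos_left (by exact_mod_cast m.pos))

theorem HahnSeries.coeff_order_ne_zero {R : Type*} [Zero R] {x : HahnSeries ℤ R} (hx : x ≠ 0) :
    x.coeff x.order ≠ 0 :=
  HahnSeries.coeff_order_eq_zero.not.mpr hx

namespace LaurentSeries

open HahnSeries

variable {R : Type*} [CommRing R] (m : ℕ+)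

theorem substPow_coeff_mul (f : LaurentSeries R) (i : ℤ) :
    (substPow R m f).coeff ((m : ℤ) * i) = f.coeff i := by
  unfold substPow
  erw [embDomainRingHom_apply]
  exact embDomain_coeff

theorem substPow_coeff_of_not_dvd (f : LaurentSeries R) {j : ℤ} (hj : ¬ ((m : ℤ) ∣ j)) :
    (substPow R m f).coeff j = 0 := by
  unfold substPow
  erw [embDomainRingHom_apply]
  apply embDomain_notin_range
  rintro ⟨i, rfl⟩
  exact hj ⟨i, rfl⟩

theorem substPow_single (k : ℤ) (a : R) :
    substPow R m (HahnSeries.single k a) = HahnSeries.single ((m : ℤ) * k) a := by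
  unfold substPow
  erw [embDomainRingHom_apply]
  exact embDomain_single

theorem substPow_substPow (m' : ℕ+) (f : LaurentSeries R) :
    substPow R m' (substPow R m f) = substPow R (m * m') f := by
  ext j
  by_cases h : ((m : ℤ) * m') ∣ j
  · obtain ⟨i, rfl⟩ := h
    have h1 : ((m : ℤ) * m') * i = (m' : ℤ) * ((m : ℤ) * i) := by ring
    have h2 : ((m * m' : ℕ+) : ℤ) = (m : ℤ) * m' := by push_cast; ring
    calc ((substPow R m') ((substPow R m) f)).coeff ((m : ℤ) * m' * i)
        = ((substPow R m') ((substPow R m) f)).coeff ((m' : ℤ) * ((m : ℤ) * i)) := by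
          ring_nf
      _ = f.coeff i := by rw [substPow_coeff_mul, substPow_coeff_mul]
      _ = ((substPow R (m * m')) f).coeff (((m * m' : ℕ+) : ℤ) * i) :=
          (substPow_coeff_mul (m * m') f i).symm
      _ = ((substPow R (m * m')) f).coeff ((m : ℤ) * m' * i) := by push_cast; ring_nf
  · rw [substPow_coeff_of_not_dvd (m * m') f (by rwa [show ((m * m' : ℕ+) : ℤ) = (m : ℤ) * m' by push_cast; ring])]
    by_cases h' : ((m' : ℤ)) ∣ j
    · obtain ⟨c, rfl⟩ := h'
      rw [substPow_coeff_mul]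
      apply substPow_coeff_of_not_dvd
      intro ⟨d, hd⟩
      exact h ⟨d, by rw [hd]; ring⟩
    · exact substPow_coeff_of_not_dvd m' _ h'

theorem order_substPow {K : Type*} [Field K] (f : LaurentSeries K) (hf : f ≠ 0) :
    (substPow K m f).order = (m : ℤ) * f.order := by
  have hne : substPow K m f ≠ 0 := by
    intro h
    apply coeff_order_ne_zero hf
    have := substPow_coeff_mul m f f.order
    rw [h] at this
    simpa using this.symm
  apply le_antisymm
  · apply order_le_of_coeff_ne_zero
    rw [substPow_coeff_mul]
    exact coeff_order_ne_zero hf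
  · by_contra hlt
    push_neg at hlt
    have hc := coeff_order_ne_zero hne
    by_cases h : ((m : ℤ)) ∣ (substPow K m f).order
    · obtain ⟨i, hi⟩ := h
      rw [hi, substPow_coeff_mul] at hc
      have : f.order ≤ i := order_le_of_coeff_ne_zero hc
      have : (m : ℤ) * f.order ≤ (m : ℤ) * i :=
        mul_le_mul_of_nonneg_left this (by positivity)
      omega
    · exact hc (substPow_coeff_of_not_dvd m f h)

end LaurentSeries

open Polynomial

section Bezout

variable {K : Type*} [Field K]

theorem bezout_deg (p₁ p₂ : K[X]) (hco : IsCoprime p₁ p₂) (h₁ : p₁.Monic) (h₂ : p₂.Monic)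
    (r : K[X]) (hr : r.degree < p₁.degree + p₂.degree) :
    ∃ a b : K[X], a.degree < p₁.degree ∧ b.degree < p₂.degree ∧ p₂ * a + p₁ * b = r := by
  obtain ⟨u, v, huv⟩ := hco
  set a := (v * r) %ₘ p₁ with ha
  set b := r * u + p₂ * ((v * r) /ₘ p₁) with hb
  have hmod : a + p₁ * ((v * r) /ₘ p₁) = v * r := modByMonic_add_div (v * r) p₁
  have key : p₂ * a + p₁ * b = r := by
    have haeq : a = v * r - p₁ * ((v * r) /ₘ p₁) := by linear_combination hmod
    rw [haeq, hb]
    linear_combination r * huv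
  have hsumbot : p₁.degree + p₂.degree ≠ ⊥ := by
    simp [WithBot.add_eq_bot, degree_eq_bot, h₁.ne_zero, h₂.ne_zero]
  refine ⟨a, b, degree_modByMonic_lt _ h₁, ?_, key⟩
  by_cases hb0 : b = 0
  · rw [hb0, degree_zero]
    exact bot_lt_iff_ne_bot.mpr (by simp [degree_eq_bot, h₂.ne_zero])
  · have h2 : p₁ * b = r - p₂ * a := by linear_combination key
    have hd : p₁.degree + b.degree < p₁.degree + p₂.degree := by
      rw [← degree_mul, h2]
      refine lt_of_le_of_lt (degree_sub_le _ _) (max_lt hr ?_)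
      rcases eq_or_ne a 0 with h | h
      · rw [h, mul_zero, degree_zero]
        exact bot_lt_iff_ne_bot.mpr hsumbot
      · rw [degree_mul, add_comm p₁.degree p₂.degree]
        refine WithBot.add_lt_add_left ?_ (degree_modByMonic_lt _ h₁)
        simp [degree_eq_bot, h₂.ne_zero]
    exact (WithBot.add_lt_add_iff_left (by simp [degree_eq_bot, h₁.ne_zero])).mp hd

end Bezout

section Hensel

variable {K : Type*} [Field K]

theorem degmul_lt {x y p₁ p₂ : K[X]} (h₁ : p₁.Monic) (h₂ : p₂.Monic)
    (hx : x.degree < p₁.degree) (hy : y.degree < p₂.degree) :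
    (x * y).degree < p₁.degree + p₂.degree := by
  rcases eq_or_ne x 0 with rfl | hx0
  · rw [zero_mul, degree_zero]
    exact bot_lt_iff_ne_bot.mpr (by simp [WithBot.add_eq_bot, degree_eq_bot, h₁.ne_zero, h₂.ne_zero])
  rcases eq_or_ne y 0 with rfl | hy0
  · rw [mul_zero, degree_zero]
    exact bot_lt_iff_ne_bot.mpr (by simp [WithBot.add_eq_bot, degree_eq_bot, h₁.ne_zero, h₂.ne_zero])
  rw [degree_eq_natDegree hx0, degree_eq_natDegree h₁.ne_zero] at hx
  rw [degree_eq_natDegree hy0, degree_eq_natDegree h₂.ne_zero] at hy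
  rw [degree_mul, degree_eq_natDegree hx0, degree_eq_natDegree hy0,
    degree_eq_natDegree h₁.ne_zero, degree_eq_natDegree h₂.ne_zero]
  have hx' : x.natDegree < p₁.natDegree := by exact_mod_cast hx
  have hy' : y.natDegree < p₂.natDegree := by exact_mod_cast hy
  exact_mod_cast Nat.add_lt_add hx' hy'

/-- The `T^j`-layer of a polynomial over power series, as a polynomial over `K`. -/
noncomputable def dn (Q : Polynomial (PowerSeries K)) (j : ℕ) : K[X] :=
  ∑ d ∈ Finset.range (Q.natDegree + 1),
    Polynomial.C (PowerSeries.coeff j (Q.coeff d)) * Polynomial.X ^ d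

theorem dn_coeff (Q : Polynomial (PowerSeries K)) (j d : ℕ) :
    (dn Q j).coeff d = PowerSeries.coeff j (Q.coeff d) := by
  rw [dn, finset_sum_coeff]
  by_cases hd : d ≤ Q.natDegree
  · rw [Finset.sum_eq_single d (fun b _ hb => by
      simp [coeff_C_mul, coeff_X_pow, Ne.symm hb])
      (fun hnot => absurd (Finset.mem_range.mpr (by omega)) hnot)]
    simp [coeff_C_mul, coeff_X_pow]
  · rw [Q.coeff_eq_zero_of_natDegree_lt (by omega), map_zero, Finset.sum_eq_zero]
    intro b hb
    have hbd : b ≠ d := by have := Finset.mem_range.mp hb; omega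
    simp [coeff_C_mul, coeff_X_pow, Ne.symm hbd]

theorem dn_degree_lt {Q : Polynomial (PowerSeries K)} (hQ : Q.Monic) {j : ℕ} (hj : 1 ≤ j) :
    (dn Q j).degree < (Q.natDegree : WithBot ℕ) := by
  rw [degree_lt_iff_coeff_zero]
  intro d hd
  rw [dn_coeff]
  rcases eq_or_lt_of_le hd with h | h
  · rw [← h, hQ.coeff_natDegree]
    simp [PowerSeries.coeff_one, Nat.one_le_iff_ne_zero.mp hj]
  · rw [Q.coeff_eq_zero_of_natDegree_lt h, map_zero]

theorem dn_zero_eq (Q : Polynomial (PowerSeries K)) :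
    dn Q 0 = Q.map (PowerSeries.constantCoeff) := by
  ext d
  rw [dn_coeff, coeff_map, PowerSeries.coeff_zero_eq_constantCoeff]

open scoped Classical in
/-- Solve `p₂ * a + p₁ * b = r` with degree constraints. -/
noncomputable def solve (p₁ p₂ r : K[X]) : K[X] × K[X] :=
  if h : IsCoprime p₁ p₂ ∧ p₁.Monic ∧ p₂.Monic ∧ r.degree < p₁.degree + p₂.degree then
    ⟨(bezout_deg p₁ p₂ h.1 h.2.1 h.2.2.1 r h.2.2.2).choose,
     (bezout_deg p₁ p₂ h.1 h.2.1 h.2.2.1 r h.2.2.2).choose_spec.choose⟩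
  else 0

theorem solve_spec {p₁ p₂ r : K[X]} (hco : IsCoprime p₁ p₂) (h₁ : p₁.Monic) (h₂ : p₂.Monic)
    (hr : r.degree < p₁.degree + p₂.degree) :
    (solve p₁ p₂ r).1.degree < p₁.degree ∧ (solve p₁ p₂ r).2.degree < p₂.degree ∧
      p₂ * (solve p₁ p₂ r).1 + p₁ * (solve p₁ p₂ r).2 = r := by
  classical
  rw [solve, dif_pos ⟨hco, h₁, h₂, hr⟩]
  obtain ⟨hb1, hb2, hb3⟩ := (bezout_deg p₁ p₂ hco h₁ h₂ r hr).choose_spec.choose_spec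
  exact ⟨hb1, hb2, hb3⟩

/-- The Hensel approximation sequence. -/
noncomputable def seq (P : Polynomial (PowerSeries K)) (p₁ p₂ : K[X]) : ℕ → K[X] × K[X]
  | 0 => (p₁, p₂)
  | (j+1) => solve p₁ p₂ (dn P (j+1) -
      ∑ i ∈ (Finset.range j).attach,
        (seq P p₁ p₂ ((i : ℕ)+1)).1 * (seq P p₁ p₂ (j - (i : ℕ))).2)
  decreasing_by
  · have := Finset.mem_range.mp i.2; omega
  · omega

theorem seq_zero (P : Polynomial (PowerSeries K)) (p₁ p₂ : K[X]) :
    seq P p₁ p₂ 0 = (p₁, p₂) := by rw [seq]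

theorem seq_succ (P : Polynomial (PowerSeries K)) (p₁ p₂ : K[X]) (j : ℕ) :
    seq P p₁ p₂ (j+1) = solve p₁ p₂ (dn P (j+1) -
      ∑ i ∈ Finset.range j, (seq P p₁ p₂ (i+1)).1 * (seq P p₁ p₂ (j-i)).2) := by
  rw [seq, Finset.sum_attach (Finset.range j)
    (fun i => (seq P p₁ p₂ (i+1)).1 * (seq P p₁ p₂ (j-i)).2)]

theorem seq_main {P : Polynomial (PowerSeries K)} (hP : P.Monic) {p₁ p₂ : K[X]}
    (h₁ : p₁.Monic) (h₂ : p₂.Monic) (hco : IsCoprime p₁ p₂)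
    (hred : P.map (PowerSeries.constantCoeff) = p₁ * p₂)
    (hdeg_sum : p₁.degree + p₂.degree = (P.natDegree : WithBot ℕ)) : ∀ j : ℕ,
    (1 ≤ j → (seq P p₁ p₂ j).1.degree < p₁.degree ∧ (seq P p₁ p₂ j).2.degree < p₂.degree) ∧
    (∑ i ∈ Finset.range (j+1), (seq P p₁ p₂ i).1 * (seq P p₁ p₂ (j-i)).2 = dn P j) := by
  have hbot : (⊥ : WithBot ℕ) < p₁.degree + p₂.degree := bot_lt_iff_ne_bot.mpr
    (by simp [WithBot.add_eq_bot, degree_eq_bot, h₁.ne_zero, h₂.ne_zero])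
  intro j
  induction j using Nat.strong_induction_on with
  | _ j ih =>
    match j with
    | 0 =>
      refine ⟨by omega, ?_⟩
      rw [dn_zero_eq, hred]
      simp [seq_zero]
    | (j+1) =>
      set r := dn P (j+1) -
        ∑ i ∈ Finset.range j, (seq P p₁ p₂ (i+1)).1 * (seq P p₁ p₂ (j-i)).2 with hr
      have hrdeg : r.degree < p₁.degree + p₂.degree := by
        refine lt_of_le_of_lt (degree_sub_le _ _) (max_lt ?_ ?_)
        · rw [hdeg_sum]; exact dn_degree_lt hP (by omega)
        · refine lt_of_le_of_lt (degree_sum_le _ _) ((Finset.sup_lt_iff hbot).mpr ?_)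
          intro i hi
          have hi' := Finset.mem_range.mp hi
          have ha := (ih (i+1) (by omega)).1 (by omega)
          have hb := (ih (j-i) (by omega)).1 (by omega)
          exact degmul_lt h₁ h₂ ha.1 hb.2
      have hs := solve_spec hco h₁ h₂ hrdeg
      have hseq : seq P p₁ p₂ (j+1) = solve p₁ p₂ r := seq_succ P p₁ p₂ j
      refine ⟨fun _ => by rw [hseq]; exact ⟨hs.1, hs.2.1⟩, ?_⟩
      rw [Finset.sum_range_succ', Finset.sum_range_succ]
      simp only [Nat.succ_sub_succ_eq_sub, Nat.sub_self, Nat.sub_zero]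
      rw [seq_zero, hseq]
      have hkey := hs.2.2
      rw [hr] at hkey
      linear_combination hkey

/-- Reassemble a sequence of polynomial layers into a polynomial over power series. -/
noncomputable def toPoly (c : ℕ → K[X]) (k : ℕ) : Polynomial (PowerSeries K) :=
  ∑ d ∈ Finset.range (k+1),
    Polynomial.C (PowerSeries.mk fun j => (c j).coeff d) * Polynomial.X ^ d

theorem toPoly_coeff (c : ℕ → K[X]) (k : ℕ) (hdeg : ∀ j, (c j).degree ≤ (k : WithBot ℕ))
    (j d : ℕ) : PowerSeries.coeff j ((toPoly c k).coeff d) = (c j).coeff d := by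
  rw [toPoly, finset_sum_coeff]
  by_cases hd : d ≤ k
  · rw [Finset.sum_eq_single d (fun b _ hb => by
      simp [coeff_C_mul, coeff_X_pow, Ne.symm hb])
      (fun hnot => absurd (Finset.mem_range.mpr (by omega)) hnot)]
    simp [coeff_C_mul, coeff_X_pow]
  · rw [Finset.sum_eq_zero (fun b hb => by
      have hbd : b ≠ d := by have := Finset.mem_range.mp hb; omega
      simp [coeff_C_mul, coeff_X_pow, Ne.symm hbd]), map_zero]
    symm
    exact coeff_eq_zero_of_degree_lt (lt_of_le_of_lt (hdeg j) (by exact_mod_cast by omega : (k : WithBot ℕ) < d))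

theorem toPoly_natDegree_le (c : ℕ → K[X]) (k : ℕ) : (toPoly c k).natDegree ≤ k := by
  refine natDegree_sum_le_of_forall_le _ _ (fun d hd => ?_)
  exact le_trans (natDegree_C_mul_X_pow_le _ _) (by have := Finset.mem_range.mp hd; omega)

theorem toPoly_monic (c : ℕ → K[X]) (k : ℕ) (hdeg : ∀ j, (c j).degree ≤ (k : WithBot ℕ))
    (h0 : (c 0).coeff k = 1) (hs : ∀ j, 1 ≤ j → (c j).coeff k = 0) :
    (toPoly c k).Monic ∧ (toPoly c k).natDegree = k := by
  have hck : (toPoly c k).coeff k = 1 := by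
    ext j
    rw [toPoly_coeff c k hdeg j k, PowerSeries.coeff_one]
    match j with
    | 0 => simpa using h0
    | (j+1) => simpa using hs (j+1) (by omega)
  have hm : (toPoly c k).Monic :=
    monic_of_natDegree_le_of_coeff_eq_one k (toPoly_natDegree_le c k) hck
  exact ⟨hm, le_antisymm (toPoly_natDegree_le c k)
    (le_natDegree_of_ne_zero (hck ▸ one_ne_zero))⟩

theorem hensel_factor {P : Polynomial (PowerSeries K)} (hP : P.Monic) {p₁ p₂ : K[X]}
    (h₁ : p₁.Monic) (h₂ : p₂.Monic) (hco : IsCoprime p₁ p₂)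
    (hred : P.map (PowerSeries.constantCoeff) = p₁ * p₂) :
    ∃ A B : Polynomial (PowerSeries K), A.Monic ∧ A.natDegree = p₁.natDegree ∧ P = A * B := by
  have hkl : p₁.natDegree + p₂.natDegree = P.natDegree := by
    have h := hP.natDegree_map (PowerSeries.constantCoeff)
    rw [hred, natDegree_mul h₁.ne_zero h₂.ne_zero] at h
    exact h
  have hdeg_sum : p₁.degree + p₂.degree = (P.natDegree : WithBot ℕ) := by
    rw [degree_eq_natDegree h₁.ne_zero, degree_eq_natDegree h₂.ne_zero, ← hkl]
    exact_mod_cast rfl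
  have hmain := seq_main hP h₁ h₂ hco hred hdeg_sum
  have hd1 : ∀ j, (seq P p₁ p₂ j).1.degree ≤ (p₁.natDegree : WithBot ℕ) := by
    intro j
    rw [← degree_eq_natDegree h₁.ne_zero]
    match j with
    | 0 => rw [seq_zero]
    | (j+1) => exact le_of_lt ((hmain (j+1)).1 (by omega)).1
  have hd2 : ∀ j, (seq P p₁ p₂ j).2.degree ≤ (p₂.natDegree : WithBot ℕ) := by
    intro j
    rw [← degree_eq_natDegree h₂.ne_zero]
    match j with
    | 0 => rw [seq_zero]
    | (j+1) => exact le_of_lt ((hmain (j+1)).1 (by omega)).2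
  set A := toPoly (fun j => (seq P p₁ p₂ j).1) p₁.natDegree with hA
  set B := toPoly (fun j => (seq P p₁ p₂ j).2) p₂.natDegree with hB
  have hAm := toPoly_monic (fun j => (seq P p₁ p₂ j).1) p₁.natDegree hd1
    (by show (seq P p₁ p₂ 0).1.coeff _ = 1; rw [seq_zero]; exact h₁.coeff_natDegree)
    (fun j hj => by
      show (seq P p₁ p₂ j).1.coeff _ = 0
      refine coeff_eq_zero_of_degree_lt ?_
      rw [← degree_eq_natDegree h₁.ne_zero]; exact ((hmain j).1 hj).1)
  refine ⟨A, B, hAm.1, hAm.2, ?_⟩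
  apply Polynomial.ext
  intro d
  apply PowerSeries.ext
  intro j
  calc PowerSeries.coeff j (P.coeff d)
      = (dn P j).coeff d := (dn_coeff P j d).symm
    _ = (∑ i ∈ Finset.range (j+1), (seq P p₁ p₂ i).1 * (seq P p₁ p₂ (j-i)).2).coeff d := by
        rw [(hmain j).2]
    _ = (∑ ij ∈ Finset.HasAntidiagonal.antidiagonal j, (seq P p₁ p₂ ij.1).1 * (seq P p₁ p₂ ij.2).2).coeff d := by
        rw [Finset.Nat.sum_antidiagonal_eq_sum_range_succ_mk
          (fun ij => (seq P p₁ p₂ ij.1).1 * (seq P p₁ p₂ ij.2).2)]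
    _ = ∑ ij ∈ Finset.HasAntidiagonal.antidiagonal j, ∑ xy ∈ Finset.HasAntidiagonal.antidiagonal d,
          (seq P p₁ p₂ ij.1).1.coeff xy.1 * (seq P p₁ p₂ ij.2).2.coeff xy.2 := by
        rw [finset_sum_coeff]
        exact Finset.sum_congr rfl fun ij _ => coeff_mul _ _ _
    _ = ∑ xy ∈ Finset.HasAntidiagonal.antidiagonal d, ∑ ij ∈ Finset.HasAntidiagonal.antidiagonal j,
          (seq P p₁ p₂ ij.1).1.coeff xy.1 * (seq P p₁ p₂ ij.2).2.coeff xy.2 :=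
        Finset.sum_comm
    _ = PowerSeries.coeff j ((A * B).coeff d) := by
        rw [coeff_mul, map_sum]
        refine Finset.sum_congr rfl fun xy _ => ?_
        rw [PowerSeries.coeff_mul]
        refine Finset.sum_congr rfl fun ij _ => ?_
        rw [hA, hB, toPoly_coeff _ _ hd1, toPoly_coeff _ _ hd2]

end Hensel

section Bridge

variable {K : Type*} [Field K]

theorem ofPS_coeff_zero (Q : PowerSeries K) :
    ((HahnSeries.ofPowerSeries ℤ K) Q).coeff (0 : ℤ) = PowerSeries.constantCoeff Q := by
  have := PowerSeries.coeff_coe (R := K) (f := Q) 0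
  simpa [PowerSeries.coeff_zero_eq_constantCoeff] using this

theorem lift_poly (H : Polynomial (LaurentSeries K)) (hH : H.Monic)
    (hord : ∀ i, 0 ≤ (H.coeff i).order) :
    ∃ P : Polynomial (PowerSeries K), P.Monic ∧ P.natDegree = H.natDegree ∧
      P.map (HahnSeries.ofPowerSeries ℤ K) = H := by
  set N := H.natDegree with hN
  set P : Polynomial (PowerSeries K) := ∑ i ∈ Finset.range (N+1),
    Polynomial.C (PowerSeries.mk fun j => (H.coeff i).coeff (j : ℤ)) * Polynomial.X ^ i with hP
  have hPcoeff : ∀ i, P.coeff i =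
      if i ≤ N then PowerSeries.mk (fun j => (H.coeff i).coeff (j : ℤ)) else 0 := by
    intro i
    rw [hP, finset_sum_coeff]
    by_cases hi : i ≤ N
    · rw [if_pos hi, Finset.sum_eq_single i (fun b _ hb => by
        simp [coeff_C_mul, coeff_X_pow, Ne.symm hb])
        (fun hnot => absurd (Finset.mem_range.mpr (by omega)) hnot)]
      simp [coeff_C_mul, coeff_X_pow]
    · rw [if_neg hi, Finset.sum_eq_zero]
      intro b hb
      have hbd : b ≠ i := by have := Finset.mem_range.mp hb; omega
      simp [coeff_C_mul, coeff_X_pow, Ne.symm hbd]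
  have hmap : P.map (HahnSeries.ofPowerSeries ℤ K) = H := by
    apply Polynomial.ext
    intro i
    rw [coeff_map, hPcoeff]
    by_cases hi : i ≤ N
    · rw [if_pos hi]
      apply HahnSeries.ext
      funext m
      rw [show ((HahnSeries.ofPowerSeries ℤ K) (PowerSeries.mk fun j => (H.coeff i).coeff (j:ℤ))).coeff m
          = if m < 0 then 0 else PowerSeries.coeff m.natAbs
              (PowerSeries.mk fun j => (H.coeff i).coeff (j:ℤ)) from
        PowerSeries.coeff_coe (PowerSeries.mk fun j => (H.coeff i).coeff (j:ℤ)) m]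
      by_cases hm : m < 0
      · rw [if_pos hm]
        exact (HahnSeries.coeff_eq_zero_of_lt_order (lt_of_lt_of_le hm (hord i))).symm
      · rw [if_neg hm, PowerSeries.coeff_mk]
        congr 1
        omega
    · rw [if_neg hi, map_zero]
      exact (H.coeff_eq_zero_of_natDegree_lt (by omega)).symm
  have hcoeffN : P.coeff N = 1 := by
    rw [hPcoeff, if_pos le_rfl]
    apply PowerSeries.ext
    intro j
    rw [PowerSeries.coeff_mk, PowerSeries.coeff_one]
    have h1 : H.coeff N = 1 := hH.coeff_natDegree
    rw [h1, HahnSeries.coeff_one]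
    by_cases hj : j = 0 <;> simp [hj]
  have hdegle : P.natDegree ≤ N := by
    refine natDegree_sum_le_of_forall_le _ _ (fun d hd => ?_)
    exact le_trans (natDegree_C_mul_X_pow_le _ _) (by have := Finset.mem_range.mp hd; omega)
  have hPm : P.Monic := monic_of_natDegree_le_of_coeff_eq_one N hdegle hcoeffN
  exact ⟨P, hPm, le_antisymm hdegle (le_natDegree_of_ne_zero (hcoeffN ▸ one_ne_zero)), hmap⟩

end Bridge

section Newton

variable {K : Type*} [Field K] [IsAlgClosed K] [CharZero K]

open LaurentSeries HahnSeries

theorem coprime_linear_pow {q : K[X]} {r : K} (k : ℕ) (hqr : q.eval r ≠ 0) :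
    IsCoprime ((Polynomial.X - Polynomial.C r) ^ k) q :=
  IsCoprime.pow_left <| (irreducible_X_sub_C r).coprime_iff_not_dvd.mpr
    (fun hdvd => hqr (dvd_iff_isRoot.mp hdvd))

theorem newton_step {n : ℕ} (hn : 2 ≤ n)
    (G : Polynomial (LaurentSeries K)) (hG : G.Monic) (hdeg : G.natDegree = n)
    (hcn1 : G.coeff (n-1) = 0) (hc0 : G.coeff 0 ≠ 0) :
    ∃ (w : ℕ+) (u : ℤ) (A B : Polynomial (LaurentSeries K)), A.Monic ∧
      1 ≤ A.natDegree ∧ A.natDegree < n ∧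
      Polynomial.scaleRoots (G.map (substPow K w)) (single (-u) 1) = A * B := by
  classical
  -- the Newton polygon minimum
  set S : Finset ℕ := (Finset.range n).filter (fun i => G.coeff i ≠ 0) with hS
  have hS0 : 0 ∈ S := by
    rw [hS, Finset.mem_filter, Finset.mem_range]
    exact ⟨by omega, hc0⟩
  obtain ⟨i₀, hi₀S, hmin⟩ := S.exists_min_image
    (fun i => ((G.coeff i).order : ℚ) / ((n : ℚ) - i)) ⟨0, hS0⟩
  have hi₀n : i₀ < n := Finset.mem_range.mp (Finset.mem_filter.mp hi₀S).1
  have hi₀ne : G.coeff i₀ ≠ 0 := (Finset.mem_filter.mp hi₀S).2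
  set u : ℤ := (G.coeff i₀).order with hu
  set w : ℕ+ := ⟨n - i₀, by omega⟩ with hw
  have hwcast : ((w : ℕ) : ℤ) = (n : ℤ) - i₀ := by
    simp only [hw, PNat.mk_coe]
    omega
  -- the key cross-multiplied inequality
  have key : ∀ i ∈ S, u * ((n : ℤ) - i) ≤ ((n : ℤ) - i₀) * (G.coeff i).order := by
    intro i hiS
    have hin : i < n := Finset.mem_range.mp (Finset.mem_filter.mp hiS).1
    have h := hmin i hiS
    rw [div_le_div_iff₀
      (by have h0 : (i₀ : ℚ) < (n : ℚ) := by exact_mod_cast hi₀n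
          linarith)
      (by have h0 : (i : ℚ) < (n : ℚ) := by exact_mod_cast hin
          linarith)] at h
    have h' : (u : ℚ) * ((n : ℚ) - i) ≤ ((n : ℚ) - i₀) * ((G.coeff i).order : ℚ) := by
      push_cast at h ⊢
      nlinarith [h]
    exact_mod_cast h'
  set τ := substPow K w with hτ
  set GW := G.map τ with hGW
  have hGWm : GW.Monic := hG.map τ
  have hGWdeg : GW.natDegree = n := by rw [hGW, hG.natDegree_map, hdeg]
  set s : LaurentSeries K := single (-u) (1 : K) with hs
  have hs0 : s ≠ 0 := single_ne_zero one_ne_zero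
  set H := GW.scaleRoots s with hH
  have hHm : H.Monic := (monic_scaleRoots_iff s).mpr hGWm
  have hHdeg : H.natDegree = n := by rw [hH, natDegree_scaleRoots, hGWdeg]
  have hHcoeff : ∀ i, H.coeff i = τ (G.coeff i) * single (((n - i : ℕ) : ℤ) * (-u)) 1 := by
    intro i
    rw [hH, coeff_scaleRoots, hGWdeg, hGW, coeff_map, hs, single_pow, one_pow, nsmul_eq_mul]
  -- order of coefficients is nonnegative
  have hordco : ∀ i, G.coeff i ≠ 0 → i ≤ n → 0 ≤ (H.coeff i).order := by
    intro i hGi hin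
    rw [hHcoeff i]
    have h1 : τ (G.coeff i) ≠ 0 := by
      rw [hτ]
      exact fun h => hGi (map_eq_zero_iff _ (RingHom.injective _) |>.mp h)
    rw [order_mul h1 (single_ne_zero one_ne_zero), hτ, order_substPow w _ hGi,
      order_single one_ne_zero]
    rcases eq_or_lt_of_le hin with h | h
    · have hGn : G.coeff i = 1 := by rw [h, ← hdeg]; exact hG.coeff_natDegree
      rw [hGn, order_one, h]
      simp
    · have hiS : i ∈ S := by
        rw [hS, Finset.mem_filter, Finset.mem_range]; exact ⟨h, hGi⟩
      have := key i hiS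
      have hcast : ((n - i : ℕ) : ℤ) = (n : ℤ) - i := by omega
      rw [hwcast, hcast]
      nlinarith [this]
  have horders : ∀ i, 0 ≤ (H.coeff i).order := by
    intro i
    by_cases hin : i ≤ n
    · by_cases hGi : G.coeff i = 0
      · rw [hHcoeff i, hτ, hGi, map_zero, zero_mul, order_zero]
      · exact hordco i hGi hin
    · rw [H.coeff_eq_zero_of_natDegree_lt (by omega), order_zero]
  -- the distinguished coefficient has a unit part
  have hHi₀ne : H.coeff i₀ ≠ 0 := by
    rw [hHcoeff i₀]
    apply mul_ne_zero _ (single_ne_zero one_ne_zero)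
    rw [hτ]
    exact fun h => hi₀ne (map_eq_zero_iff _ (RingHom.injective _) |>.mp h)
  have hHi₀ord : (H.coeff i₀).order = 0 := by
    rw [hHcoeff i₀]
    have h1 : τ (G.coeff i₀) ≠ 0 := by
      rw [hτ]
      exact fun h => hi₀ne (map_eq_zero_iff _ (RingHom.injective _) |>.mp h)
    rw [order_mul h1 (single_ne_zero one_ne_zero), hτ, order_substPow w _ hi₀ne,
      order_single one_ne_zero, hwcast]
    have hcast : ((n - i₀ : ℕ) : ℤ) = (n : ℤ) - i₀ := by omega
    rw [hcast, ← hu]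
    ring
  have hHi₀c : (H.coeff i₀).coeff (0 : ℤ) ≠ 0 := by
    have := coeff_order_ne_zero hHi₀ne
    rwa [hHi₀ord] at this
  have hHn1 : H.coeff (n-1) = 0 := by
    rw [hHcoeff (n-1), hτ, hcn1, map_zero, zero_mul]
  -- lift to power series and reduce
  obtain ⟨P, hPm, hPdeg, hPmap⟩ := lift_poly H hHm horders
  set pbar := P.map (PowerSeries.constantCoeff) with hpbar
  have hpbarm : pbar.Monic := hPm.map _
  have hpbardeg : pbar.natDegree = n := by rw [hpbar, hPm.natDegree_map, hPdeg, hHdeg]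
  have hpbarcoeff : ∀ i, pbar.coeff i = (H.coeff i).coeff (0 : ℤ) := by
    intro i
    rw [hpbar, coeff_map, ← ofPS_coeff_zero, ← coeff_map, hPmap]
  -- find a root and its multiplicity
  have hpne : pbar ≠ 0 := hpbarm.ne_zero
  obtain ⟨r, hr⟩ := IsAlgClosed.exists_root pbar
    (by rw [degree_eq_natDegree hpne, hpbardeg]; exact_mod_cast (by omega : n ≠ 0))
  set k := rootMultiplicity r pbar with hk
  set q := pbar /ₘ (Polynomial.X - Polynomial.C r) ^ k with hq
  have heq : (Polynomial.X - Polynomial.C r) ^ k * q = pbar :=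
    pow_mul_divByMonic_rootMultiplicity_eq pbar r
  have hqr : q.eval r ≠ 0 := eval_divByMonic_pow_rootMultiplicity_ne_zero r hpne
  have hk1 : 1 ≤ k := (rootMultiplicity_pos hpne).mpr hr
  have hp1m : ((Polynomial.X - Polynomial.C r) ^ k).Monic := (monic_X_sub_C r).pow k
  have hp1deg : ((Polynomial.X - Polynomial.C r) ^ k).natDegree = k := by
    rw [natDegree_pow, natDegree_X_sub_C, mul_one]
  have hqm : q.Monic := hp1m.of_mul_monic_left (heq.symm ▸ hpbarm)
  have hqdeg : k + q.natDegree = n := by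
    have := natDegree_mul hp1m.ne_zero hqm.ne_zero
    rw [heq, hpbardeg, hp1deg] at this
    omega
  have hkn : k < n := by
    by_contra hknn
    push_neg at hknn
    have hkeq : k = n := by omega
    have hq1 : q = 1 := hqm.natDegree_eq_zero.mp (by omega)
    have hpeq : pbar = (Polynomial.X - Polynomial.C r) ^ n := by
      rw [← heq, hq1, mul_one, hkeq]
    have hr0 : r = 0 := by
      have h1 : pbar.coeff (n-1) = 0 := by
        rw [hpbarcoeff, hHn1, HahnSeries.coeff_zero]
      rw [hpeq, show Polynomial.X - Polynomial.C r =
        Polynomial.X + Polynomial.C (-r) by simp [sub_eq_add_neg], coeff_X_add_C_pow] at h1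
      have hch : n.choose (n-1) = n := by
        rw [Nat.choose_symm (by omega : 1 ≤ n), Nat.choose_one_right]
      rw [hch, show n - (n-1) = 1 by omega, pow_one] at h1
      have hnK : (n : K) ≠ 0 := Nat.cast_ne_zero.mpr (by omega)
      have := mul_eq_zero.mp h1
      rcases this with h | h
      · exact neg_eq_zero.mp h
      · exact absurd h hnK
    rw [hr0, map_zero, sub_zero] at hpeq
    have : pbar.coeff i₀ = 0 := by
      rw [hpeq, coeff_X_pow, if_neg (by omega)]
    rw [hpbarcoeff] at this
    exact hHi₀c this
  -- Hensel lifting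
  obtain ⟨A₀, B₀, hA₀m, hA₀deg, hPfac⟩ := hensel_factor hPm hp1m hqm
    (coprime_linear_pow k hqr) (by rw [← hpbar, ← heq])
  refine ⟨w, u, A₀.map (HahnSeries.ofPowerSeries ℤ K), B₀.map (HahnSeries.ofPowerSeries ℤ K),
    hA₀m.map _, ?_, ?_, ?_⟩
  · rw [hA₀m.natDegree_map, hA₀deg, hp1deg]; omega
  · rw [hA₀m.natDegree_map, hA₀deg, hp1deg]; omega
  · show H = _
    rw [← hPmap, hPfac, Polynomial.map_mul]

theorem exists_root :
    ∀ n : ℕ, 1 ≤ n → ∀ F : Polynomial (LaurentSeries K), F.Monic → F.natDegree = n →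
    ∃ (m : ℕ+) (η : LaurentSeries K), (F.map (substPow K m)).eval η = 0 := by
  intro n
  induction n using Nat.strong_induction_on with
  | _ n ih =>
    intro hn F hFm hFdeg
    rcases eq_or_lt_of_le hn with h1 | h2
    · -- degree 1
      set p := F.map (substPow K 1) with hp
      have hpm : p.Monic := hFm.map _
      have hpdeg : p.natDegree = 1 := by rw [hp, hFm.natDegree_map, hFdeg, ← h1]
      refine ⟨1, -(p.coeff 0), ?_⟩
      rw [← hp, eq_X_add_C_of_natDegree_le_one (le_of_eq hpdeg)]
      have : p.coeff 1 = 1 := by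
        have := hpm.coeff_natDegree
        rwa [hpdeg] at this
      rw [this]
      simp
    · -- degree ≥ 2
      have hn2 : 2 ≤ n := h2
      -- Tschirnhaus shift
      have hnK : ((n : ℕ) : LaurentSeries K) ≠ 0 := by
        rw [← map_natCast (HahnSeries.C : K →+* LaurentSeries K) n]
        exact HahnSeries.C_ne_zero (Nat.cast_ne_zero.mpr (by omega))
      set b := F.coeff (n-1) with hb
      set r : LaurentSeries K := -(b / (n : LaurentSeries K)) with hr
      set G := Polynomial.taylor r F with hG
      have hGm : G.Monic := by
        rw [hG, taylor_apply]
        exact hFm.comp_X_add_C r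
      have hGdeg : G.natDegree = n := by rw [hG, natDegree_taylor, hFdeg]
      have hGn1 : G.coeff (n-1) = 0 := by
        rw [hG, taylor_coeff]
        set D := Polynomial.hasseDeriv (n-1) F with hD
        have hD1 : D.natDegree ≤ 1 := by
          refine le_trans (natDegree_hasseDeriv_le F (n-1)) (by omega)
        have hD0 : D.coeff 0 = b := by
          rw [hD, Polynomial.hasseDeriv_coeff, show 0 + (n-1) = n-1 by omega]
          simp [Nat.choose_self, hb]
        have hFn : F.coeff n = 1 := by rw [← hFdeg]; exact hFm.coeff_natDegree
        have hD1c : D.coeff 1 = ((n : ℕ) : LaurentSeries K) := by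
          rw [hD, Polynomial.hasseDeriv_coeff, show 1 + (n-1) = n by omega, hFn, mul_one,
            Nat.choose_symm (by omega : 1 ≤ n), Nat.choose_one_right]
        have heval : eval r D = D.coeff 1 * r + D.coeff 0 := by
          conv_lhs => rw [eq_X_add_C_of_natDegree_le_one hD1]
          rw [eval_add, eval_mul, eval_C, eval_X, eval_C]
        rw [heval, hD0, hD1c, hr]
        linear_combination (-1 : LaurentSeries K) * mul_div_cancel_left₀ b hnK
      -- transfer roots through the taylor shift
      have htransfer : ∀ (m : ℕ+) (η : LaurentSeries K),
          (G.map (substPow K m)).eval η = 0 →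
          (F.map (substPow K m)).eval (η + substPow K m r) = 0 := by
        intro m η hη
        rw [hG, taylor_apply, Polynomial.map_comp] at hη
        rw [Polynomial.map_add, Polynomial.map_X, Polynomial.map_C, eval_comp] at hη
        simpa using hη
      by_cases hG0 : G.coeff 0 = 0
      · refine ⟨1, 0 + substPow K 1 r, htransfer 1 0 ?_⟩
        rw [show (0 : LaurentSeries K) = 0 from rfl, ← coeff_zero_eq_eval_zero,
          coeff_map, hG0, map_zero]
      · -- Newton polygon case
        obtain ⟨w, u, A, B, hAm, hA1, hAn, hfac⟩ := newton_step hn2 G hGm hGdeg hGn1 hG0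
        obtain ⟨m', η', hroot'⟩ := ih A.natDegree hAn hA1 A hAm rfl
        -- η' is a root of the scaled polynomial mapped through substPow m'
        have hHroot : Polynomial.eval η' (((G.map (substPow K w)).scaleRoots
            (HahnSeries.single (-u) 1)).map (substPow K m')) = 0 := by
          rw [hfac, Polynomial.map_mul, eval_mul, hroot', zero_mul]
        have hcomp : (substPow K m').comp (substPow K w) = substPow K (w * m') :=
          RingHom.ext fun f => substPow_substPow w m' f
        rw [map_scaleRoots _ _ _ (by
          rw [(hGm.map (substPow K w)).leadingCoeff]
          simp)] at hHroot
        rw [Polynomial.map_map, hcomp] at hHroot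
        set Q := G.map (substPow K (w * m')) with hQ
        set s' := substPow K m' (HahnSeries.single (-u) 1) with hs'
        have hs'single : s' = HahnSeries.single ((m' : ℤ) * (-u)) 1 := substPow_single m' _ _
        have hs'ne : s' ≠ 0 := by
          rw [hs'single]
          exact HahnSeries.single_ne_zero one_ne_zero
        set θ := HahnSeries.single ((m' : ℤ) * u) (1 : K) * η' with hθ
        have hsθ : s' * θ = η' := by
          rw [hθ, hs'single, ← mul_assoc, HahnSeries.single_mul_single, mul_one,
            show (m' : ℤ) * (-u) + (m' : ℤ) * u = 0 by ring,
            HahnSeries.single_zero_one, one_mul]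
        have hQroot : Q.eval θ = 0 := by
          have hkey := scaleRoots_eval₂_mul (RingHom.id (LaurentSeries K)) θ s' (p := Q)
          simp only [RingHom.id_apply] at hkey
          rw [hsθ] at hkey
          rw [show ∀ (x : LaurentSeries K) (p : Polynomial (LaurentSeries K)),
            eval₂ (RingHom.id _) x p = eval x p from fun x p => by
              rw [eval₂_eq_eval_map, Polynomial.map_id]] at hkey
          rw [hHroot] at hkey
          exact (mul_eq_zero.mp hkey.symm).resolve_left (pow_ne_zero _ hs'ne)
        exact ⟨w * m', θ + substPow K (w * m') r, htransfer (w * m') θ hQroot⟩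


theorem split_all :
    ∀ (n : ℕ) (F : Polynomial (LaurentSeries K)), F.Monic → F.natDegree = n →
    ∃ (m : ℕ+) (η : Fin n → LaurentSeries K),
      F.map (substPow K m) = ∏ i, (Polynomial.X - Polynomial.C (η i)) := by
  intro n
  induction n with
  | zero =>
    intro F hm hd
    refine ⟨1, fun i => i.elim0, ?_⟩
    rw [hm.natDegree_eq_zero.mp hd]
    simp
  | succ n ihn =>
    intro F hm hd
    obtain ⟨m₁, η₁, hroot⟩ := exists_root (n+1) (by omega) F hm hd
    set F₁ := F.map (substPow K m₁) with hF₁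
    have hF₁m : F₁.Monic := hm.map _
    have hF₁deg : F₁.natDegree = n + 1 := by rw [hF₁, hm.natDegree_map, hd]
    have heq : (Polynomial.X - Polynomial.C η₁) * (F₁ /ₘ (Polynomial.X - Polynomial.C η₁)) = F₁ :=
      mul_divByMonic_eq_iff_isRoot.mpr hroot
    set F₂ := F₁ /ₘ (Polynomial.X - Polynomial.C η₁) with hF₂
    have hF₂m : F₂.Monic := (monic_X_sub_C η₁).of_mul_monic_left (heq.symm ▸ hF₁m)
    have hF₂deg : F₂.natDegree = n := by
      have := natDegree_mul (monic_X_sub_C η₁).ne_zero hF₂m.ne_zero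
      rw [heq, hF₁deg, natDegree_X_sub_C] at this
      omega
    obtain ⟨m₂, η, hsplit⟩ := ihn F₂ hF₂m hF₂deg
    refine ⟨m₁ * m₂, Fin.cons (substPow K m₂ η₁) η, ?_⟩
    have hcomp : (substPow K m₂).comp (substPow K m₁) = substPow K (m₁ * m₂) :=
      RingHom.ext fun f => substPow_substPow m₁ m₂ f
    have hmapstep : F.map (substPow K (m₁ * m₂)) = F₁.map (substPow K m₂) := by
      rw [hF₁, Polynomial.map_map, hcomp]
    rw [hmapstep, ← heq, Polynomial.map_mul, hsplit, Polynomial.map_sub,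
      Polynomial.map_X, Polynomial.map_C]
    rw [Fin.prod_univ_succ]
    simp only [Fin.cons_zero, Fin.cons_succ]

end Newton


open Polynomial

/-- The field of fractional power series is separably algebraically closed: a monic separable
`F ∈ (K((X)))[Y]` of degree `n ≥ 1` factors linearly after the substitution `X ↦ T^m`
for some `m > 0`. -/
theorem statement6 {K : Type*} [Field K] [IsAlgClosed K] [CharZero K]
    (n : ℕ) (hn : 1 ≤ n) (F : Polynomial (LaurentSeries K))
    (hmonic : F.Monic) (hdeg : F.natDegree = n) (hsep : F.Separable) :
    ∃ m : ℕ+, ∃ η : Fin n → LaurentSeries K,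
      F.map (LaurentSeries.substPow K m) = ∏ i, (X - C (η i)) := by
  exact split_all n F hmonic hdeg
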